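/- Suppose 1/√(1+b²) ≤ a/c ≤ k/√(k²+b²) for some k > 0, a, c > 0 along a curve parametrized by b, and d(log(ac))/db = 2(a/c)²b / ((a/c)² + 1). Then 2b/(2+b²) ≤ d(log(ac))/db ≤ 2bk²/(2k²+b²), and integrating from b = 0 with ac → q² gives q²(2+b²)/2 ≤ ac ≤ q²((2k²+b²)/(2k²))^{k²}. -/

import Mathlib

open Set Filter

/-- Integration lemma: if g has nonnegative derivative on (0,β) and tends to L as b→0⁺,
then L ≤ g b for b ∈ (0,β). -/
lemma integrate_ge (g g' : ℝ → ℝ) {β : ℝ}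
    (hd : ∀ s ∈ Set.Ioo (0:ℝ) β, HasDerivAt g (g' s) s)
    (hnn : ∀ s ∈ Set.Ioo (0:ℝ) β, 0 ≤ g' s)
    {L : ℝ} (hlim : Filter.Tendsto g (nhdsWithin 0 (Set.Ioi 0)) (nhds L))
    {b : ℝ} (hb : b ∈ Set.Ioo (0:ℝ) β) : L ≤ g b := by
  obtain ⟨hb0, hbβ⟩ := hb
  have hev : ∀ᶠ ε in nhdsWithin (0:ℝ) (Set.Ioi 0), g ε ≤ g b := by
    filter_upwards [Ioo_mem_nhdsGT hb0] with ε hε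
    obtain ⟨hε0, hεb⟩ := hε
    have hsub : Set.Icc ε b ⊆ Set.Ioo 0 β := fun x hx =>
      ⟨hε0.trans_le hx.1, lt_of_le_of_lt hx.2 hbβ⟩
    have hmono : MonotoneOn g (Set.Icc ε b) := by
      apply monotoneOn_of_deriv_nonneg (convex_Icc ε b)
      · intro x hx
        exact ((hd x (hsub hx)).continuousAt).continuousWithinAt
      · intro x hx
        rw [interior_Icc] at hx
        exact ((hd x (hsub (Set.mem_Icc_of_Ioo hx))).differentiableAt).differentiableWithinAt
      · intro x hx
        rw [interior_Icc] at hx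
        have := (hd x (hsub (Set.mem_Icc_of_Ioo hx))).deriv
        rw [this]
        exact hnn x (hsub (Set.mem_Icc_of_Ioo hx))
    exact hmono (Set.mem_Icc.2 ⟨le_refl ε, hεb.le⟩)
      (Set.mem_Icc.2 ⟨hεb.le, le_refl b⟩) hεb.le
  exact le_of_tendsto hlim hev

lemma lower_ineq {r b : ℝ} (hb : 0 < b) (hr : 1 / Real.sqrt (1 + b ^ 2) ≤ r) :
    2 * b / (2 + b ^ 2) ≤ 2 * r ^ 2 * b / (r ^ 2 + 1) := by
  have h1 : (0:ℝ) < 1 + b ^ 2 := by positivity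
  have hs : Real.sqrt (1 + b ^ 2) > 0 := Real.sqrt_pos.2 h1
  have hr0 : 0 < r := lt_of_lt_of_le (by positivity) hr
  have hsq : 1 / (1 + b ^ 2) ≤ r ^ 2 := by
    have := pow_le_pow_left₀ (by positivity) hr 2
    rwa [div_pow, one_pow, Real.sq_sqrt h1.le] at this
  have key : 1 ≤ r ^ 2 * (1 + b ^ 2) := by
    rw [div_le_iff₀ h1] at hsq; linarith
  rw [div_le_div_iff₀ (by positivity) (by positivity)]
  nlinarith [sq_nonneg b, hb.le]

lemma upper_ineq {r b k : ℝ} (hb : 0 < b) (hk : 0 < k) (hr0 : 0 < r)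
    (hr : r ≤ k / Real.sqrt (k ^ 2 + b ^ 2)) :
    2 * r ^ 2 * b / (r ^ 2 + 1) ≤ 2 * b * k ^ 2 / (2 * k ^ 2 + b ^ 2) := by
  have h1 : (0:ℝ) < k ^ 2 + b ^ 2 := by positivity
  have hsq : r ^ 2 ≤ k ^ 2 / (k ^ 2 + b ^ 2) := by
    have := pow_le_pow_left₀ hr0.le hr 2
    rwa [div_pow, Real.sq_sqrt h1.le] at this
  have key : r ^ 2 * (k ^ 2 + b ^ 2) ≤ k ^ 2 := by
    rw [le_div_iff₀ h1] at hsq; linarith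
  rw [div_le_div_iff₀ (by positivity) (by positivity)]
  nlinarith [sq_nonneg r, hb.le]

theorem stmt_12 (A C : ℝ → ℝ) (β k q : ℝ) (hβ : 0 < β) (hk : 0 < k) (hq : 0 < q)
    (hpos : ∀ b ∈ Set.Ioo (0 : ℝ) β, 0 < A b ∧ 0 < C b)
    (hbound : ∀ b ∈ Set.Ioo (0 : ℝ) β,
      1 / Real.sqrt (1 + b ^ 2) ≤ A b / C b ∧ A b / C b ≤ k / Real.sqrt (k ^ 2 + b ^ 2))
    (hderiv : ∀ b ∈ Set.Ioo (0 : ℝ) β, HasDerivAt (fun s => Real.log (A s * C s))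
      (2 * (A b / C b) ^ 2 * b / ((A b / C b) ^ 2 + 1)) b)
    (hlim : Filter.Tendsto (fun b => A b * C b) (nhdsWithin 0 (Set.Ioi 0)) (nhds (q ^ 2))) :
    ∀ b ∈ Set.Ioo (0 : ℝ) β,
      (2 * b / (2 + b ^ 2) ≤ 2 * (A b / C b) ^ 2 * b / ((A b / C b) ^ 2 + 1) ∧
        2 * (A b / C b) ^ 2 * b / ((A b / C b) ^ 2 + 1) ≤ 2 * b * k ^ 2 / (2 * k ^ 2 + b ^ 2)) ∧
      q ^ 2 * (2 + b ^ 2) / 2 ≤ A b * C b ∧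
      A b * C b ≤ q ^ 2 * ((2 * k ^ 2 + b ^ 2) / (2 * k ^ 2)) ^ (k ^ 2 : ℝ) := by
  -- basic facts
  have hq2 : (0:ℝ) < q ^ 2 := by positivity
  have hrpos : ∀ s ∈ Set.Ioo (0:ℝ) β, 0 < A s / C s := fun s hs =>
    div_pos (hpos s hs).1 (hpos s hs).2
  -- derivative inequalities at every point
  have hlow : ∀ s ∈ Set.Ioo (0:ℝ) β,
      2 * s / (2 + s ^ 2) ≤ 2 * (A s / C s) ^ 2 * s / ((A s / C s) ^ 2 + 1) :=
    fun s hs => lower_ineq hs.1 (hbound s hs).1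
  have hupp : ∀ s ∈ Set.Ioo (0:ℝ) β,
      2 * (A s / C s) ^ 2 * s / ((A s / C s) ^ 2 + 1) ≤ 2 * s * k ^ 2 / (2 * k ^ 2 + s ^ 2) :=
    fun s hs => upper_ineq hs.1 hk (hrpos s hs) (hbound s hs).2
  -- log limit
  have hloglim : Filter.Tendsto (fun s => Real.log (A s * C s))
      (nhdsWithin 0 (Set.Ioi 0)) (nhds (Real.log (q ^ 2))) :=
    (Real.continuousAt_log hq2.ne').tendsto.comp hlim
  intro b hb
  refine ⟨⟨hlow b hb, hupp b hb⟩, ?_, ?_⟩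
  · -- lower integrated bound
    set g : ℝ → ℝ := fun s => Real.log (A s * C s) - Real.log (2 + s ^ 2) with hg
    have hdg : ∀ s ∈ Set.Ioo (0:ℝ) β, HasDerivAt g
        (2 * (A s / C s) ^ 2 * s / ((A s / C s) ^ 2 + 1) - 2 * s / (2 + s ^ 2)) s := by
      intro s hs
      have h2 : HasDerivAt (fun t : ℝ => 2 + t ^ 2) (2 * s) s := by
        simpa using (hasDerivAt_pow 2 s).const_add 2
      have hlog : HasDerivAt (fun t : ℝ => Real.log (2 + t ^ 2)) (2 * s / (2 + s ^ 2)) s :=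
        h2.log (by positivity)
      exact (hderiv s hs).sub hlog
    have hnn : ∀ s ∈ Set.Ioo (0:ℝ) β,
        0 ≤ 2 * (A s / C s) ^ 2 * s / ((A s / C s) ^ 2 + 1) - 2 * s / (2 + s ^ 2) :=
      fun s hs => sub_nonneg.2 (hlow s hs)
    have hglim : Filter.Tendsto g (nhdsWithin 0 (Set.Ioi 0))
        (nhds (Real.log (q ^ 2) - Real.log 2)) := by
      apply hloglim.sub
      have : Filter.Tendsto (fun s : ℝ => Real.log (2 + s ^ 2)) (nhds 0)
          (nhds (Real.log 2)) := by
        have hc : ContinuousAt (fun s : ℝ => Real.log (2 + s ^ 2)) 0 :=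
          (Real.continuousAt_log (by norm_num)).comp (by fun_prop)
        simpa using hc.tendsto
      exact this.mono_left nhdsWithin_le_nhds
    have hkey := integrate_ge g _ hdg hnn hglim hb
    -- unfold
    have hAC : 0 < A b * C b := mul_pos (hpos b hb).1 (hpos b hb).2
    have h2b : (0:ℝ) < 2 + b ^ 2 := by positivity
    have : Real.log (q ^ 2 * (2 + b ^ 2) / 2) ≤ Real.log (A b * C b) := by
      rw [Real.log_div (by positivity) (by norm_num), Real.log_mul hq2.ne' h2b.ne']
      simp only [hg] at hkey
      linarith
    rwa [Real.log_le_log_iff (by positivity) hAC] at this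
  · -- upper integrated bound
    set g : ℝ → ℝ := fun s => k ^ 2 * Real.log (2 * k ^ 2 + s ^ 2) - Real.log (A s * C s)
      with hg
    have hdg : ∀ s ∈ Set.Ioo (0:ℝ) β, HasDerivAt g
        (2 * s * k ^ 2 / (2 * k ^ 2 + s ^ 2)
          - 2 * (A s / C s) ^ 2 * s / ((A s / C s) ^ 2 + 1)) s := by
      intro s hs
      have h2 : HasDerivAt (fun t : ℝ => 2 * k ^ 2 + t ^ 2) (2 * s) s := by
        simpa using (hasDerivAt_pow 2 s).const_add (2 * k ^ 2)
      have hlog : HasDerivAt (fun t : ℝ => k ^ 2 * Real.log (2 * k ^ 2 + t ^ 2))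
          (k ^ 2 * (2 * s / (2 * k ^ 2 + s ^ 2))) s :=
        (h2.log (by positivity)).const_mul (k ^ 2)
      have := hlog.sub (hderiv s hs)
      convert this using 1
      · rfl
      · rfl
      · rfl
      ring
    have hnn : ∀ s ∈ Set.Ioo (0:ℝ) β,
        0 ≤ 2 * s * k ^ 2 / (2 * k ^ 2 + s ^ 2)
          - 2 * (A s / C s) ^ 2 * s / ((A s / C s) ^ 2 + 1) :=
      fun s hs => sub_nonneg.2 (hupp s hs)
    have hglim : Filter.Tendsto g (nhdsWithin 0 (Set.Ioi 0))
        (nhds (k ^ 2 * Real.log (2 * k ^ 2) - Real.log (q ^ 2))) := by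
      apply Filter.Tendsto.sub _ hloglim
      have hc0 : ContinuousAt (fun s : ℝ => 2 * k ^ 2 + s ^ 2) 0 := by fun_prop
      have hne : (fun s : ℝ => 2 * k ^ 2 + s ^ 2) 0 ≠ 0 := by
        simp; positivity
      have hc : ContinuousAt (fun s : ℝ => k ^ 2 * Real.log (2 * k ^ 2 + s ^ 2)) 0 :=
        (hc0.log hne).const_mul (k ^ 2)
      have : Filter.Tendsto (fun s : ℝ => k ^ 2 * Real.log (2 * k ^ 2 + s ^ 2)) (nhds 0)
          (nhds (k ^ 2 * Real.log (2 * k ^ 2))) := by simpa using hc.tendsto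
      exact this.mono_left nhdsWithin_le_nhds
    have hkey := integrate_ge g _ hdg hnn hglim hb
    have hAC : 0 < A b * C b := mul_pos (hpos b hb).1 (hpos b hb).2
    have h2k : (0:ℝ) < 2 * k ^ 2 := by positivity
    have h2kb : (0:ℝ) < 2 * k ^ 2 + b ^ 2 := by positivity
    have hratio : (0:ℝ) < (2 * k ^ 2 + b ^ 2) / (2 * k ^ 2) := by positivity
    have : Real.log (A b * C b)
        ≤ Real.log (q ^ 2 * ((2 * k ^ 2 + b ^ 2) / (2 * k ^ 2)) ^ (k ^ 2 : ℝ)) := by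
      rw [Real.log_mul hq2.ne' (Real.rpow_pos_of_pos hratio _).ne',
        Real.log_rpow hratio, Real.log_div h2kb.ne' h2k.ne']
      simp only [hg] at hkey
      linarith
    rwa [Real.log_le_log_iff hAC (by positivity)] at this
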